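/- For C > 1 define G(x,C) = (h(x + 1/(2C)) − h(x + 1/2))/(h(x) − h(x + 1/(2C))). Then G(0,C) = C(1+log 2)/(log(2C)+1) − 1 ≥ ((1+log 2)/2)√C − 1. -/

import Mathlib

/-- Value and lower bound of `G(0, C)` where
`G(x,C) = (h(x+1/(2C)) - h(x+1/2)) / (h(x) - h(x+1/(2C)))`, `h(t) = t log t - t`. -/
theorem G_zero_value_and_bound (C : ℝ) (hC : 1 < C) :
    ((1 / (2 * C)) * Real.log (1 / (2 * C)) - 1 / (2 * C) -
        ((1 / 2) * Real.log (1 / 2) - 1 / 2)) /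
      ((0 : ℝ) * Real.log 0 - 0 -
        ((1 / (2 * C)) * Real.log (1 / (2 * C)) - 1 / (2 * C))) =
      C * (1 + Real.log 2) / (Real.log (2 * C) + 1) - 1 ∧
    (1 + Real.log 2) / 2 * Real.sqrt C - 1 ≤
      C * (1 + Real.log 2) / (Real.log (2 * C) + 1) - 1 := by
  have hC0 : (0:ℝ) < C := by linarith
  have h2C : (0:ℝ) < 2 * C := by linarith
  have hlog2C : 0 < Real.log (2 * C) := Real.log_pos (by linarith)
  have hL : 0 < Real.log (2 * C) + 1 := by linarith
  constructor
  · rw [Real.log_zero, one_div (2*C), Real.log_inv, Real.log_div one_ne_zero two_ne_zero,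
      Real.log_one]
    field_simp [hL.ne', (ne_of_gt (by linarith) : 1 + Real.log (2 * C) ≠ 0)]
    ring
  · have hsq : 0 < Real.sqrt C := Real.sqrt_pos.mpr hC0
    have hCsq : Real.sqrt C * Real.sqrt C = C := Real.mul_self_sqrt hC0.le
    have h1 : Real.sqrt C ≥ 1 := by
      nlinarith [hCsq]
    have hlogC : Real.log C ≤ 2 * (Real.sqrt C - 1) := by
      have := Real.log_le_sub_one_of_pos hsq
      have h2 : Real.log (Real.sqrt C) = Real.log C / 2 := Real.log_sqrt hC0.le
      linarith
    have hlog2 : Real.log 2 ≤ 1 := by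
      have := Real.log_le_sub_one_of_pos (by norm_num : (0:ℝ) < 2); linarith
    have hkey : Real.log (2 * C) + 1 ≤ 2 * Real.sqrt C := by
      rw [Real.log_mul two_ne_zero (ne_of_gt hC0)]
      linarith
    have hpos : 0 < 1 + Real.log 2 := by
      have := Real.log_pos (by norm_num : (1:ℝ) < 2); linarith
    have : (1 + Real.log 2) / 2 * Real.sqrt C ≤ C * (1 + Real.log 2) / (Real.log (2 * C) + 1) := by
      rw [le_div_iff₀ hL]
      nlinarith [mul_nonneg (mul_nonneg hpos.le hsq.le) (sub_nonneg.mpr hkey), hCsq]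
    linarith
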